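/- The matrix I + αÃ is invertible, and the limit v = lim_{k→∞} v^(k) of the counting-model sequence is the unique vector satisfying the fixed-point equation v = e − α Ã v (equivalently, v = (I + αÃ)^{−1} e). -/

import Mathlib

open Matrix Filter Topology

attribute [local instance] Matrix.linftyOpNormedRing Matrix.linftyOpNormedSpace

/-- I + αÃ is invertible and the limit v of the counting-model sequence
is the unique solution of v = e − α Ã v. -/
theorem counting_semantics_fixed_point
    (n : ℕ) (R : Fin n → Fin n → Prop) [DecidableRel R]
    (hR : ∃ i j, R i j)
    (A : Matrix (Fin n) (Fin n) ℝ)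
    (hA : ∀ i j, A i j = if R j i then 1 else 0)
    (N : ℝ) (hN : IsGreatest (Set.range fun i : Fin n => ∑ j, |A i j|) N)
    (At : Matrix (Fin n) (Fin n) ℝ) (hAt : At = N⁻¹ • A)
    (e : Fin n → ℝ) (he : e = fun _ => 1)
    (α : ℝ) (hα : α ∈ Set.Ioo (0 : ℝ) 1)
    (vs : ℕ → Fin n → ℝ)
    (hvs : ∀ k, vs k = ∑ ℓ ∈ Finset.range (k + 1), ((-1 : ℝ) ^ ℓ * α ^ ℓ) • ((At ^ ℓ) *ᵥ e))
    (v : Fin n → ℝ) (hv : Tendsto vs atTop (𝓝 v)) :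
    IsUnit (1 + α • At) ∧ v = e - α • (At *ᵥ v) ∧
      ∀ w : Fin n → ℝ, w = e - α • (At *ᵥ w) → w = v := by
  obtain ⟨i0, j0, hij⟩ := hR
  -- N ≥ 1
  have hN1 : (1 : ℝ) ≤ N := by
    have habs : |A j0 i0| = 1 := by rw [hA]; simp [hij]
    have h1 : (1 : ℝ) ≤ ∑ j, |A j0 j| := by
      rw [← habs]
      exact Finset.single_le_sum (f := fun j => |A j0 j|)
        (fun j _ => abs_nonneg _) (Finset.mem_univ i0)
    exact h1.trans (hN.2 ⟨j0, rfl⟩)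
  have hNpos : (0 : ℝ) < N := lt_of_lt_of_le one_pos hN1
  -- ‖At‖ ≤ 1
  have hAtnorm : ‖At‖ ≤ 1 := by
    rw [Matrix.linfty_opNorm_def]
    rw [show (1:ℝ) = ((1 : NNReal) : ℝ) by simp, NNReal.coe_le_coe]
    apply Finset.sup_le
    intro i _
    rw [← NNReal.coe_le_coe]
    push_cast
    have hrow : ∑ j, ‖At i j‖ = N⁻¹ * ∑ j, |A i j| := by
      rw [Finset.mul_sum]
      refine Finset.sum_congr rfl fun j _ => ?_
      rw [hAt, Matrix.smul_apply, smul_eq_mul, Real.norm_eq_abs, abs_mul,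
        abs_of_pos (inv_pos.mpr hNpos)]
    have : ∑ j, ‖At i j‖ ≤ 1 := by
      rw [hrow, ← inv_mul_cancel₀ hNpos.ne']
      exact mul_le_mul_of_nonneg_left (hN.2 ⟨i, rfl⟩) (inv_pos.mpr hNpos).le
    simpa using this
  have hnorm : ‖-(α • At)‖ < 1 := by
    rw [norm_neg, norm_smul, Real.norm_eq_abs, abs_of_pos hα.1]
    calc α * ‖At‖ ≤ α * 1 := mul_le_mul_of_nonneg_left hAtnorm hα.1.le
      _ < 1 := by linarith [hα.2]
  haveI : CompleteSpace (Matrix (Fin n) (Fin n) ℝ) := FiniteDimensional.complete ℝ _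
  have hUnit : IsUnit (1 + α • At) := by
    have := (Units.oneSub (-(α • At)) hnorm).isUnit
    simpa [sub_neg_eq_add] using this
  -- mulVec distributes over sums
  have hmsum : ∀ (s : Finset ℕ) (g : ℕ → Fin n → ℝ),
      At *ᵥ (∑ ℓ ∈ s, g ℓ) = ∑ ℓ ∈ s, At *ᵥ g ℓ := by
    intro s g
    funext i
    simp [Matrix.mulVec, dotProduct, Finset.mul_sum]
    rw [Finset.sum_comm]
  -- recurrence
  have key : ∀ k, vs (k + 1) = e - α • (At *ᵥ vs k) := by
    intro k
    have hstep : ∀ ℓ : ℕ,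
        ((-1 : ℝ) ^ (ℓ + 1) * α ^ (ℓ + 1)) • ((At ^ (ℓ + 1)) *ᵥ e)
          = -(α • (At *ᵥ (((-1 : ℝ) ^ ℓ * α ^ ℓ) • ((At ^ ℓ) *ᵥ e)))) := by
      intro ℓ
      rw [pow_succ' At, ← Matrix.mulVec_mulVec, Matrix.mulVec_smul,
        ← neg_smul, smul_smul]
      congr 1
      simp only [pow_succ]
      ring
    rw [hvs, hvs, Finset.sum_range_succ',
      Finset.sum_congr rfl fun ℓ _ => hstep ℓ]
    simp only [pow_zero, one_mul, one_smul, Matrix.one_mulVec]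
    rw [Finset.sum_neg_distrib, ← Finset.smul_sum, ← hmsum]
    abel
  -- limit equation
  have hcont : Continuous fun w : Fin n → ℝ => e - α • (At *ᵥ w) := by
    have h1 : Continuous fun w : Fin n → ℝ => At *ᵥ w := by
      have := (Matrix.mulVecLin At).continuous_of_finiteDimensional
      exact this
    exact continuous_const.sub (h1.const_smul α)
  have hlim1 : Tendsto (fun k => vs (k + 1)) atTop (𝓝 v) :=
    hv.comp (tendsto_add_atTop_nat 1)
  have hlim2 : Tendsto (fun k => e - α • (At *ᵥ vs k)) atTop (𝓝 (e - α • (At *ᵥ v))) :=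
    (hcont.tendsto v).comp hv
  have hfix : v = e - α • (At *ᵥ v) := by
    refine tendsto_nhds_unique hlim1 ?_
    simpa only [key] using hlim2
  refine ⟨hUnit, hfix, fun w hw => ?_⟩
  -- uniqueness
  obtain ⟨u, hu⟩ := hUnit
  have hsub : w - v = -(α • (At *ᵥ (w - v))) := by
    rw [Matrix.mulVec_sub, smul_sub, neg_sub]
    nth_rewrite 1 [hw]
    nth_rewrite 1 [hfix]
    abel
  have hzero : (1 + α • At) *ᵥ (w - v) = 0 := by
    rw [Matrix.add_mulVec, Matrix.one_mulVec, Matrix.smul_mulVec]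
    nth_rewrite 1 [hsub]
    abel
  have h2 : (↑u⁻¹ : Matrix (Fin n) (Fin n) ℝ) *ᵥ ((↑u : Matrix (Fin n) (Fin n) ℝ) *ᵥ (w - v)) = 0 := by
    rw [hu, hzero, Matrix.mulVec_zero]
  rw [Matrix.mulVec_mulVec, u.inv_mul, Matrix.one_mulVec, sub_eq_zero] at h2
  exact h2
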